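/- Let G be a simple graph on a finite vertex type V with edge set E = E(G), and define T̃(G;u,v) = ∑_{s ⊆ E} (-1)^{|s|} u^{b0(s)} v^{b1(s)} in ℤ[u,v]. Then the coefficient of the monomial u^{b0(E)} v^{b1(E)} in T̃(G;u,v) equals (-1)^{|E|} (this monomial arises only from the state s = E, the term of maximal complexity; in particular b0(E), and hence the rank r(E) = |V| - b0(E), can be recovered from T̃(G;u,v)). -/
import Mathlib

open MvPolynomial

/-- The edge set of `G` as a `Finset`. -/
noncomputable def graphEdges {V : Type*} [Fintype V] (G : SimpleGraph V) : Finset (Sym2 V) :=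
  G.edgeSet.toFinite.toFinset

/-- `b0 s` is the number of connected components of the spanning subgraph `[G:s]`
with vertex set `V` and edge set `s`. -/
noncomputable def b0 {V : Type*} [Fintype V] (s : Finset (Sym2 V)) : ℕ :=
  Nat.card (SimpleGraph.fromEdgeSet (↑s : Set (Sym2 V))).ConnectedComponent

/-- `b1 s = |s| - r(s)` where `r(s) = |V| - b0 s`, i.e. the first Betti number of `[G:s]`. -/
noncomputable def b1 {V : Type*} [Fintype V] (s : Finset (Sym2 V)) : ℕ :=
  s.card + b0 (V := V) s - Fintype.card V

/-- `T̂(G;x,y) = ∑_{s ⊆ E(G)} (-1)^{|s|} (1+x)^{b0(s)} (1+y)^{b1(s)}` in `ℤ[x,y]`,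
where `x = X 0`, `y = X 1`. -/
noncomputable def That {V : Type*} [Fintype V] (G : SimpleGraph V) : MvPolynomial (Fin 2) ℤ :=
  ∑ s ∈ (graphEdges G).powerset,
    (-1 : MvPolynomial (Fin 2) ℤ) ^ s.card * (1 + X 0) ^ b0 s * (1 + X 1) ^ b1 s

/-- `T̃(G;u,v) = ∑_{s ⊆ E(G)} (-1)^{|s|} u^{b0(s)} v^{b1(s)}` in `ℤ[u,v]`,
where `u = X 0`, `v = X 1`. -/
noncomputable def Ttilde {V : Type*} [Fintype V] (G : SimpleGraph V) : MvPolynomial (Fin 2) ℤ :=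
  ∑ s ∈ (graphEdges G).powerset,
    (-1 : MvPolynomial (Fin 2) ℤ) ^ s.card * (X 0) ^ b0 s * (X 1) ^ b1 s



open SimpleGraph in
lemma reach_sup_edge {V : Type*} (G : SimpleGraph V) (a b : V) {u w : V}
    (h : (G ⊔ SimpleGraph.edge a b).Reachable u w) :
    G.Reachable u w ∨ (G.Reachable u a ∧ G.Reachable b w) ∨
      (G.Reachable u b ∧ G.Reachable a w) := by
  obtain ⟨p⟩ := h
  induction p with
  | nil => exact Or.inl (Reachable.refl _)
  | @cons u x w h p ih =>
    rcases h with h | h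
    · rcases ih with h1 | ⟨h1, h2⟩ | ⟨h1, h2⟩
      · exact Or.inl (h.reachable.trans h1)
      · exact Or.inr (Or.inl ⟨h.reachable.trans h1, h2⟩)
      · exact Or.inr (Or.inr ⟨h.reachable.trans h1, h2⟩)
    · rw [SimpleGraph.edge_adj] at h
      obtain ⟨⟨rfl, rfl⟩ | ⟨rfl, rfl⟩, _⟩ := h
      · rcases ih with h1 | ⟨h1, h2⟩ | ⟨h1, h2⟩
        · exact Or.inr (Or.inl ⟨Reachable.refl _, h1⟩)
        · exact Or.inl (h1.symm.trans h2)
        · exact Or.inl h2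
      · rcases ih with h1 | ⟨h1, h2⟩ | ⟨h1, h2⟩
        · exact Or.inr (Or.inr ⟨Reachable.refl _, h1⟩)
        · exact Or.inl h2
        · exact Or.inl (h1.symm.trans h2)

open SimpleGraph in
lemma card_cc_le_sup_edge {V : Type*} [Finite V] (G : SimpleGraph V) (a b : V) :
    Nat.card G.ConnectedComponent ≤
      Nat.card (G ⊔ SimpleGraph.edge a b).ConnectedComponent + 1 := by
  classical
  set H := G ⊔ SimpleGraph.edge a b with hH
  let f : G.ConnectedComponent → H.ConnectedComponent :=
    ConnectedComponent.map (Hom.ofLE le_sup_left)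
  let F : G.ConnectedComponent → H.ConnectedComponent ⊕ Unit := fun c =>
    if c = G.connectedComponentMk b then Sum.inr () else Sum.inl (f c)
  have hf : ∀ u w : V, f (G.connectedComponentMk u) = f (G.connectedComponentMk w) →
      H.Reachable u w := by
    intro u w h
    simp only [f, ConnectedComponent.map_mk] at h
    exact (ConnectedComponent.eq).1 h
  have hFinj : Function.Injective F := by
    intro c d hcd
    by_cases hc : c = G.connectedComponentMk b <;>
      by_cases hd : d = G.connectedComponentMk b
    · exact hc.trans hd.symm
    · simp only [F, if_pos hc, if_neg hd] at hcd
      exact absurd hcd (by simp)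
    · simp only [F, if_neg hc, if_pos hd] at hcd
      exact absurd hcd (by simp)
    · simp only [F, if_neg hc, if_neg hd, Sum.inl.injEq] at hcd
      obtain ⟨u, rfl⟩ := c.exists_rep
      obtain ⟨w, rfl⟩ := d.exists_rep
      have := reach_sup_edge G a b (hf u w hcd)
      rcases this with h1 | ⟨h1, h2⟩ | ⟨h1, h2⟩
      · exact ConnectedComponent.sound h1
      · exact absurd (ConnectedComponent.sound h2.symm) hd
      · exact absurd (ConnectedComponent.sound h1) hc
  calc Nat.card G.ConnectedComponent ≤ Nat.card (H.ConnectedComponent ⊕ Unit) :=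
        Nat.card_le_card_of_injective F hFinj
    _ = Nat.card H.ConnectedComponent + 1 := by rw [Nat.card_sum]; simp

lemma b0_empty {V : Type*} [Fintype V] : b0 (V := V) ∅ = Fintype.card V := by
  have : (SimpleGraph.fromEdgeSet (↑(∅ : Finset (Sym2 V)) : Set (Sym2 V))) = ⊥ := by
    simp
  simp only [b0, this]
  rw [← Nat.card_eq_fintype_card]
  refine (Nat.card_eq_of_bijective (SimpleGraph.connectedComponentMk (⊥ : SimpleGraph V)) ⟨?_, ?_⟩).symm
  · intro u v h
    exact SimpleGraph.reachable_bot.1 ((SimpleGraph.ConnectedComponent.eq).1 h)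
  · exact fun c => c.exists_rep

lemma card_le_card_add_b0 {V : Type*} [Fintype V] (s : Finset (Sym2 V)) :
    Fintype.card V ≤ s.card + b0 s := by
  classical
  induction s using Finset.induction_on with
  | empty => simp [b0_empty]
  | @insert e s he ih =>
    induction e using Sym2.ind with | _ a b =>
    have key : SimpleGraph.fromEdgeSet (↑(insert s(a, b) s) : Set (Sym2 V)) =
        SimpleGraph.fromEdgeSet (↑s : Set (Sym2 V)) ⊔ SimpleGraph.edge a b := by
      rw [Finset.coe_insert, Set.insert_eq, SimpleGraph.fromEdgeSet_union, SimpleGraph.edge,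
        sup_comm]
    have hb : b0 s ≤ b0 (insert s(a, b) s) + 1 := by
      simp only [b0, key]
      exact card_cc_le_sup_edge _ a b
    rw [Finset.card_insert_of_notMem he]
    omega

/-- the coefficient of the maximal-complexity monomial
`u^{b0(E)} v^{b1(E)}` in `T̃(G;u,v)` equals `(-1)^{|E|}`. -/
theorem Ttilde_coeff_max {V : Type*} [Fintype V] (G : SimpleGraph V) :
    MvPolynomial.coeff
      (Finsupp.single (0 : Fin 2) (b0 (graphEdges G)) +
        Finsupp.single (1 : Fin 2) (b1 (graphEdges G))) (Ttilde G)
    = (-1) ^ (graphEdges G).card := by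
  classical
  set E := graphEdges G with hE
  have hterm : ∀ s : Finset (Sym2 V),
      ((-1 : MvPolynomial (Fin 2) ℤ) ^ s.card * (X 0) ^ b0 s * (X 1) ^ b1 s)
        = MvPolynomial.monomial
            (Finsupp.single (0 : Fin 2) (b0 s) + Finsupp.single (1 : Fin 2) (b1 s))
            ((-1 : ℤ) ^ s.card) := by
    intro s
    rw [X_pow_eq_monomial, X_pow_eq_monomial, mul_assoc, monomial_mul, mul_one]
    rw [show ((-1 : MvPolynomial (Fin 2) ℤ) ^ s.card) = C ((-1 : ℤ) ^ s.card) by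
      simp, C_mul_monomial, mul_one]
  rw [Ttilde, coeff_sum]
  simp only [hterm, coeff_monomial]
  rw [Finset.sum_eq_single_of_mem E (Finset.mem_powerset_self E)]
  · simp
  · intro s hs hne
    rw [if_neg]
    intro h
    have h0 := DFunLike.congr_fun h (0 : Fin 2)
    have h1 := DFunLike.congr_fun h (1 : Fin 2)
    simp [Finsupp.single_apply] at h0 h1
    have hb0 : b0 s = b0 E := h0
    have hb1 : b1 s = b1 E := h1
    have hsub : s ⊆ E := Finset.mem_powerset.1 hs
    have hc1 := card_le_card_add_b0 s
    have hc2 := card_le_card_add_b0 E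
    have hcard : s.card ≤ E.card := Finset.card_le_card hsub
    rw [b1, b1] at hb1
    have : E.card ≤ s.card := by omega
    exact hne (Finset.eq_of_subset_of_card_le hsub this)
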